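/- Let ℓ ≥ 1, let 1 ≤ b ≤ k ≤ n. Let (σ_1, A_1), …, (σ_ℓ, A_ℓ) be a proper configuration (σ_i ∈ {0,…,b}, A_i ⊆ {1,…,n}, σ_i + |A_i| ≤ k), and suppose gid_k((σ_i,A_i)_i) = 0 and Σ_{i=1}^ℓ (σ_i + |A_i|) < (ℓ−1)·k. Then there exists a minimal expansion (σ'_1, A'_1), …, (σ'_ℓ, A'_ℓ), i.e. σ_i ≤ σ'_i ≤ b and A_i ⊆ A'_i ⊆ {1,…,n} for all i with Σ_{i=1}^ℓ ((σ'_i − σ_i) + (|A'_i| − |A_i|)) = 1, which is again proper and satisfies gid_k((σ'_i,A'_i)_i) = 0. -/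

import Mathlib

open Finset Matrix

noncomputable section

/-- The intersection `⋂_{j ∈ p} A j`, as a `Finset (Fin n)`. -/
def interSet {ℓ n : ℕ} (A : Fin ℓ → Finset (Fin n)) (p : Finset (Fin ℓ)) : Finset (Fin n) :=
  Finset.univ.filter fun x => ∀ j ∈ p, x ∈ A j

/-- The dimension-`m` null intersection property: for every partition of `{1,…,ℓ}`
(presented as a `Finpartition` of `Finset.univ : Finset (Fin ℓ)`) into nonempty parts
`P_1,…,P_s`, we have `Σ_i |⋂_{j ∈ P_i} A_j| ≤ (s-1)·m`. -/
def NullInter {ℓ n : ℕ} (m : ℕ) (A : Fin ℓ → Finset (Fin n)) : Prop :=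
  ∀ P : Finpartition (Finset.univ : Finset (Fin ℓ)),
    ∑ p ∈ P.parts, (interSet A p).card ≤ (P.parts.card - 1) * m

/-- Span of the columns of `M` indexed by `A`. -/
def colSpan {K : Type*} [Field K] {k n : ℕ} (M : Matrix (Fin k) (Fin n) K)
    (A : Finset (Fin n)) : Submodule K (Fin k → K) :=
  Submodule.span K ((fun j i => M i j) '' (A : Set (Fin n)))

/-- Span of the first `σ` columns of `M`. -/
def colSpanLT {K : Type*} [Field K] {k b : ℕ} (M : Matrix (Fin k) (Fin b) K)
    (σ : ℕ) : Submodule K (Fin k → K) :=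
  Submodule.span K ((fun j i => M i j) '' {j : Fin b | (j : ℕ) < σ})

/-- The minimum of `σ` over the set `p` (for nonempty `p`, this is `min_{j ∈ p} σ j`). -/
def partMin {ℓ : ℕ} (σ : Fin ℓ → ℕ) (p : Finset (Fin ℓ)) : ℕ :=
  sInf (σ '' (p : Set (Fin ℓ)))

/-- The generic intersection dimension `gid_m((σ_i, A_i)_i)`: the maximum over all
partitions of `{1,…,ℓ}` into nonempty parts `P_1,…,P_s` of
`-m(s-1) + Σ_i (min_{j ∈ P_i} σ_j + |⋂_{j ∈ P_i} A_j|)`. -/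
def gid {ℓ n : ℕ} (m : ℕ) (σ : Fin ℓ → ℕ) (A : Fin ℓ → Finset (Fin n)) : ℤ :=
  sSup { v : ℤ | ∃ P : Finpartition (Finset.univ : Finset (Fin ℓ)),
    v = -(m : ℤ) * ((P.parts.card : ℤ) - 1)
      + ∑ p ∈ P.parts, ((partMin σ p : ℤ) + ((interSet A p).card : ℤ)) }

section AuxBasic

variable {ℓ n : ℕ} (σ : Fin ℓ → ℕ) (A : Fin ℓ → Finset (Fin n))

lemma mem_interSet {p : Finset (Fin ℓ)} {x : Fin n} :
    x ∈ interSet A p ↔ ∀ j ∈ p, x ∈ A j := by simp [interSet]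

lemma interSet_anti {p q : Finset (Fin ℓ)} (h : p ⊆ q) : interSet A q ⊆ interSet A p := by
  intro x hx
  rw [mem_interSet] at hx ⊢
  exact fun j hj => hx j (h hj)

lemma interSet_singleton (i : Fin ℓ) : interSet A {i} = A i := by
  ext x; simp [mem_interSet]

lemma interSet_insert (i : Fin ℓ) (p : Finset (Fin ℓ)) :
    interSet A (insert i p) = A i ∩ interSet A p := by
  ext x; simp [mem_interSet]

lemma interSet_union (p q : Finset (Fin ℓ)) :
    interSet A (p ∪ q) = interSet A p ∩ interSet A q := by
  ext x
  simp only [mem_interSet, Finset.mem_union, Finset.mem_inter]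
  constructor
  · intro hx
    exact ⟨fun j hj => hx j (Or.inl hj), fun j hj => hx j (Or.inr hj)⟩
  · rintro ⟨h1, h2⟩ j (hj | hj)
    · exact h1 j hj
    · exact h2 j hj

lemma interSet_congr {A' : Fin ℓ → Finset (Fin n)} {p : Finset (Fin ℓ)}
    (h : ∀ j ∈ p, A j = A' j) : interSet A p = interSet A' p := by
  ext x; rw [mem_interSet, mem_interSet]
  exact ⟨fun hx j hj => (h j hj) ▸ hx j hj, fun hx j hj => (h j hj).symm ▸ hx j hj⟩

lemma partMin_le {p : Finset (Fin ℓ)} {i : Fin ℓ} (h : i ∈ p) : partMin σ p ≤ σ i :=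
  Nat.sInf_le ⟨i, by simpa using h, rfl⟩

lemma partMin_exists {p : Finset (Fin ℓ)} (h : p.Nonempty) :
    ∃ i ∈ p, partMin σ p = σ i := by
  obtain ⟨i, hi⟩ := h
  have hne : (σ '' (p : Set (Fin ℓ))).Nonempty := ⟨σ i, ⟨i, by simpa using hi, rfl⟩⟩
  obtain ⟨j, hj, hje⟩ := Nat.sInf_mem hne
  exact ⟨j, by simpa using hj, hje.symm⟩

lemma partMin_anti {p q : Finset (Fin ℓ)} (hp : p.Nonempty) (h : p ⊆ q) :
    partMin σ q ≤ partMin σ p := by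
  obtain ⟨i, hi, he⟩ := partMin_exists σ hp
  rw [he]
  exact partMin_le σ (h hi)

lemma partMin_singleton (i : Fin ℓ) : partMin σ {i} = σ i := by
  simp [partMin]

/-- `f(p) = min_{j∈p} σ_j + |⋂_{j∈p} A_j|` as an integer. -/
def fval (p : Finset (Fin ℓ)) : ℤ :=
  (partMin σ p : ℤ) + ((interSet A p).card : ℤ)

lemma fval_singleton (i : Fin ℓ) :
    fval σ A {i} = (σ i : ℤ) + ((A i).card : ℤ) := by
  rw [fval, partMin_singleton, interSet_singleton]

lemma fval_le {k : ℕ} (hproper : ∀ i, σ i + (A i).card ≤ k) {p : Finset (Fin ℓ)}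
    (hp : p.Nonempty) : fval σ A p ≤ k := by
  obtain ⟨i, hi⟩ := hp
  have h1 : partMin σ p ≤ σ i := partMin_le σ hi
  have h2 : (interSet A p).card ≤ (A i).card := by
    apply Finset.card_le_card
    intro x hx
    exact (mem_interSet A).1 hx i hi
  have := hproper i
  rw [fval]
  push_cast
  omega

lemma fval_nonneg (p : Finset (Fin ℓ)) : 0 ≤ fval σ A p := by
  rw [fval]; positivity

lemma fval_supermodular {p q : Finset (Fin ℓ)} (h : (p ∩ q).Nonempty) :
    fval σ A p + fval σ A q ≤ fval σ A (p ∩ q) + fval σ A (p ∪ q) := by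
  have hp : p.Nonempty := h.mono (Finset.inter_subset_left)
  have hq : q.Nonempty := h.mono (Finset.inter_subset_right)
  -- card part
  have hcard : (interSet A p).card + (interSet A q).card ≤
      (interSet A (p ∩ q)).card + (interSet A (p ∪ q)).card := by
    have h1 : interSet A p ∪ interSet A q ⊆ interSet A (p ∩ q) := by
      apply Finset.union_subset
      · exact interSet_anti A Finset.inter_subset_left
      · exact interSet_anti A Finset.inter_subset_right
    rw [interSet_union]
    have h3 := Finset.card_le_card h1
    have h4 := Finset.card_union_add_card_inter (interSet A p) (interSet A q)
    omega
  -- min part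
  have hmin : partMin σ p + partMin σ q ≤ partMin σ (p ∩ q) + partMin σ (p ∪ q) := by
    obtain ⟨j, hj, hje⟩ := partMin_exists σ (hp.mono (Finset.subset_union_left (s₂ := q)))
    rcases Finset.mem_union.1 hj with hjp | hjq
    · have h1 : partMin σ p ≤ partMin σ (p ∪ q) := hje ▸ partMin_le σ hjp
      have h2 : partMin σ q ≤ partMin σ (p ∩ q) :=
        partMin_anti σ h Finset.inter_subset_right
      omega
    · have h1 : partMin σ q ≤ partMin σ (p ∪ q) := hje ▸ partMin_le σ hjq
      have h2 : partMin σ p ≤ partMin σ (p ∩ q) :=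
        partMin_anti σ h Finset.inter_subset_left
      omega
  rw [fval, fval, fval, fval]
  push_cast
  omega

end AuxBasic

section AuxPart

variable {ℓ n : ℕ} (σ : Fin ℓ → ℕ) (A : Fin ℓ → Finset (Fin n))

lemma fval_telescope (T : Finset (Fin ℓ)) (hT : T.Nonempty)
    (D : Finset (Finset (Fin ℓ))) :
    (↑D : Set (Finset (Fin ℓ))).PairwiseDisjoint id →
    (∀ q ∈ D, (q ∩ T).Nonempty) →
    (∑ q ∈ D, fval σ A q) + fval σ A T ≤
      (∑ q ∈ D, fval σ A (q ∩ T)) + fval σ A (T ∪ D.sup id) := by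
  classical
  induction D using Finset.induction_on with
  | empty => simp
  | @insert q D hq ih =>
    intro hdisj hmeet
    have hdisj' : (↑D : Set (Finset (Fin ℓ))).PairwiseDisjoint id :=
      hdisj.subset (by simp [Finset.coe_insert, Set.subset_insert])
    have hmeet' : ∀ r ∈ D, (r ∩ T).Nonempty := fun r hr => hmeet r (Finset.mem_insert_of_mem hr)
    have IH := ih hdisj' hmeet'
    have hqD : Disjoint q (D.sup id) := by
      rw [Finset.disjoint_sup_right]
      intro r hr
      exact hdisj (by simp) (by simp [hr]) (fun h => hq (h ▸ hr))
    -- q ∩ (T ∪ D.sup id) = q ∩ T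
    have hkey : q ∩ (T ∪ D.sup id) = q ∩ T := by
      rw [Finset.inter_union_distrib_left, Finset.disjoint_iff_inter_eq_empty.1 hqD,
        Finset.union_empty]
    have hsup : fval σ A q + fval σ A (T ∪ D.sup id) ≤
        fval σ A (q ∩ T) + fval σ A (q ∪ (T ∪ D.sup id)) := by
      have := fval_supermodular σ A (p := q) (q := T ∪ D.sup id)
        (by rw [hkey]; exact hmeet q (Finset.mem_insert_self q D))
      rwa [hkey] at this
    have hTu : q ∪ (T ∪ D.sup id) = T ∪ (insert q D).sup id := by
      rw [Finset.sup_insert]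
      ext y
      simp only [Finset.mem_union, Finset.sup_eq_union, id_eq, Finset.mem_union]
      tauto
    rw [Finset.sum_insert hq, Finset.sum_insert hq]
    rw [hTu] at hsup
    omega

/-- Coarsen a partition by merging the parts in `C` into a single part. -/
def mergeParts (Q : Finpartition (Finset.univ : Finset (Fin ℓ)))
    (C : Finset (Finset (Fin ℓ))) (hC : C ⊆ Q.parts) (hne : C.Nonempty) :
    Finpartition (Finset.univ : Finset (Fin ℓ)) where
  parts := insert (C.sup id) (Q.parts \ C)
  supIndep := by
    rw [Finset.supIndep_iff_pairwiseDisjoint]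
    intro a ha b hb hab
    simp only [Function.onFun, id_eq]
    simp only [Finset.coe_insert, Set.mem_insert_iff, Finset.coe_sdiff, Set.mem_diff,
      Finset.mem_coe, Finset.mem_sdiff] at ha hb
    have hQd := Q.disjoint
    rcases ha with ha | ⟨haQ, haC⟩ <;> rcases hb with hb | ⟨hbQ, hbC⟩
    · exact absurd (ha.trans hb.symm) hab
    · subst ha
      rw [Finset.disjoint_sup_left]
      intro r hr
      exact hQd (Finset.mem_coe.2 (hC hr)) (Finset.mem_coe.2 hbQ) (fun h => hbC (h ▸ hr))
    · subst hb
      rw [Finset.disjoint_sup_right]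
      intro r hr
      exact hQd (Finset.mem_coe.2 haQ) (Finset.mem_coe.2 (hC hr)) (fun h => haC (h.symm ▸ hr))
    · exact hQd (Finset.mem_coe.2 haQ) (Finset.mem_coe.2 hbQ) hab
  sup_parts := by
    rw [Finset.sup_insert]
    have : Q.parts = C ∪ (Q.parts \ C) := (Finset.union_sdiff_of_subset hC).symm
    have h2 := Q.sup_parts
    rw [this, Finset.sup_union] at h2
    exact h2
  bot_notMem := by
    intro h
    rcases Finset.mem_insert.1 h with h | h
    · obtain ⟨q₀, hq₀⟩ := hne
      have h1 : q₀ ≤ C.sup id := Finset.le_sup (f := id) hq₀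
      have h2 : q₀.Nonempty := Q.nonempty_of_mem_parts (hC hq₀)
      rw [← h] at h1
      simp only [Finset.bot_eq_empty, Finset.le_eq_subset, Finset.subset_empty] at h1
      exact h2.ne_empty h1
    · exact Q.bot_notMem (Finset.mem_sdiff.1 h).1

lemma mergeParts_sup_not_mem (Q : Finpartition (Finset.univ : Finset (Fin ℓ)))
    (C : Finset (Finset (Fin ℓ))) (hC : C ⊆ Q.parts) (hne : C.Nonempty) :
    C.sup id ∉ Q.parts \ C := by
  intro h
  obtain ⟨hQ, hCn⟩ := Finset.mem_sdiff.1 h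
  obtain ⟨q₀, hq₀⟩ := hne
  have hne0 : q₀ ≠ C.sup id := fun h => hCn (h ▸ hq₀)
  have hdisj : Disjoint q₀ (C.sup id) :=
    Q.disjoint (Finset.mem_coe.2 (hC hq₀)) (Finset.mem_coe.2 hQ) hne0
  have hle : q₀ ≤ C.sup id := Finset.le_sup (f := id) hq₀
  have : q₀ = ⊥ := by
    have := hdisj.mono_left le_rfl
    exact le_bot_iff.1 (hdisj le_rfl hle)
  exact (Q.nonempty_of_mem_parts (hC hq₀)).ne_empty (by simpa using this)

lemma mergeParts_card (Q : Finpartition (Finset.univ : Finset (Fin ℓ)))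
    (C : Finset (Finset (Fin ℓ))) (hC : C ⊆ Q.parts) (hne : C.Nonempty) :
    (mergeParts Q C hC hne).parts.card + C.card = Q.parts.card + 1 := by
  have h1 : (mergeParts Q C hC hne).parts.card = (Q.parts \ C).card + 1 :=
    Finset.card_insert_of_notMem (mergeParts_sup_not_mem Q C hC hne)
  have h2 := Finset.card_sdiff_add_card_eq_card hC
  omega

lemma mergeParts_sum (Q : Finpartition (Finset.univ : Finset (Fin ℓ)))
    (C : Finset (Finset (Fin ℓ))) (hC : C ⊆ Q.parts) (hne : C.Nonempty)
    (g : Finset (Fin ℓ) → ℤ) :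
    ∑ p ∈ (mergeParts Q C hC hne).parts, g p + ∑ q ∈ C, g q
      = g (C.sup id) + ∑ p ∈ Q.parts, g p := by
  have h1 : ∑ p ∈ (mergeParts Q C hC hne).parts, g p
      = g (C.sup id) + ∑ p ∈ Q.parts \ C, g p :=
    Finset.sum_insert (mergeParts_sup_not_mem Q C hC hne)
  have h2 : ∑ p ∈ Q.parts \ C, g p + ∑ q ∈ C, g q = ∑ p ∈ Q.parts, g p :=
    Finset.sum_sdiff hC
  omega

end AuxPart

section AuxSplit

variable {ℓ n : ℕ}

/-- Refine a partition by splitting the part `T` into its intersections with the parts of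
another partition `Q`. -/
def splitParts (R Q : Finpartition (Finset.univ : Finset (Fin ℓ)))
    (T : Finset (Fin ℓ)) (hT : T ∈ R.parts) :
    Finpartition (Finset.univ : Finset (Fin ℓ)) where
  parts := (R.parts.erase T) ∪
    (Q.parts.filter fun q => (q ∩ T).Nonempty).image (· ∩ T)
  supIndep := by
    rw [Finset.supIndep_iff_pairwiseDisjoint]
    intro a ha b hb hab
    simp only [Function.onFun, id_eq]
    simp only [Finset.coe_union, Set.mem_union, Finset.mem_coe, Finset.mem_erase,
      Finset.coe_image, Set.mem_image, Finset.mem_coe, Finset.mem_filter] at ha hb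
    have hRd := R.disjoint
    have hQd := Q.disjoint
    rcases ha with ⟨haT, haR⟩ | ⟨qa, ⟨hqa, hqaT⟩, rfl⟩
    · rcases hb with ⟨hbT, hbR⟩ | ⟨qb, ⟨hqb, hqbT⟩, rfl⟩
      · exact hRd (Finset.mem_coe.2 haR) (Finset.mem_coe.2 hbR) hab
      · have : Disjoint a T := hRd (Finset.mem_coe.2 haR) (Finset.mem_coe.2 hT) haT
        exact this.mono_right Finset.inter_subset_right
    · rcases hb with ⟨hbT, hbR⟩ | ⟨qb, ⟨hqb, hqbT⟩, rfl⟩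
      · have : Disjoint T b := hRd (Finset.mem_coe.2 hT) (Finset.mem_coe.2 hbR) (Ne.symm hbT)
        exact this.mono_left Finset.inter_subset_right
      · have hne : qa ≠ qb := fun h => hab (h ▸ rfl)
        have : Disjoint qa qb := hQd (Finset.mem_coe.2 hqa) (Finset.mem_coe.2 hqb) hne
        exact (this.mono_left Finset.inter_subset_left).mono_right Finset.inter_subset_left
  sup_parts := by
    have hTsub : T ⊆ (Q.parts.filter fun q => (q ∩ T).Nonempty).sup id := by
      intro t ht
      obtain ⟨q, hq, htq⟩ := Q.exists_mem (Finset.mem_univ t)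
      exact Finset.mem_sup.2 ⟨q, Finset.mem_filter.2 ⟨hq, ⟨t, Finset.mem_inter.2 ⟨htq, ht⟩⟩⟩, htq⟩
    have himg : ((Q.parts.filter fun q => (q ∩ T).Nonempty).image (· ∩ T)).sup id = T := by
      apply le_antisymm
      · rw [Finset.sup_le_iff]
        intro b hb
        obtain ⟨q, _, rfl⟩ := Finset.mem_image.1 hb
        exact Finset.inter_subset_right
      · intro t ht
        obtain ⟨q, hq, htq⟩ := Q.exists_mem (Finset.mem_univ t)
        have hqf : q ∈ Q.parts.filter fun q => (q ∩ T).Nonempty :=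
          Finset.mem_filter.2 ⟨hq, ⟨t, Finset.mem_inter.2 ⟨htq, ht⟩⟩⟩
        exact Finset.mem_sup.2 ⟨q ∩ T, Finset.mem_image_of_mem _ hqf,
          Finset.mem_inter.2 ⟨htq, ht⟩⟩
    rw [Finset.sup_union, himg]
    have h2 := R.sup_parts
    have h3 : R.parts = insert T (R.parts.erase T) := (Finset.insert_erase hT).symm
    rw [h3, Finset.sup_insert] at h2
    rw [sup_comm] at h2
    exact h2
  bot_notMem := by
    intro h
    rcases Finset.mem_union.1 h with h | h
    · exact R.bot_notMem (Finset.mem_of_mem_erase h)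
    · obtain ⟨q, hq, he⟩ := Finset.mem_image.1 h
      have := (Finset.mem_filter.1 hq).2
      rw [he] at this
      simp at this

lemma splitParts_injOn (Q : Finpartition (Finset.univ : Finset (Fin ℓ)))
    (T : Finset (Fin ℓ)) :
    Set.InjOn (· ∩ T) ↑(Q.parts.filter fun q => (q ∩ T).Nonempty) := by
  intro a ha b hb hab
  simp only [Finset.coe_filter, Set.mem_setOf_eq] at ha hb
  by_contra hne
  have := Q.disjoint (Finset.mem_coe.2 ha.1) (Finset.mem_coe.2 hb.1) hne
  have h2 : a ∩ T ⊆ a := Finset.inter_subset_left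
  have h3 : a ∩ T ⊆ b := by
    have : a ∩ T = b ∩ T := hab
    rw [this]
    exact Finset.inter_subset_left
  obtain ⟨x, hx⟩ := ha.2
  exact Finset.disjoint_left.1 this (h2 hx) (h3 hx)

lemma splitParts_img_disj (R Q : Finpartition (Finset.univ : Finset (Fin ℓ)))
    (T : Finset (Fin ℓ)) (hT : T ∈ R.parts) :
    Disjoint (R.parts.erase T)
      ((Q.parts.filter fun q => (q ∩ T).Nonempty).image (· ∩ T)) := by
  rw [Finset.disjoint_right]
  intro b hb hbe
  obtain ⟨q, hq, rfl⟩ := Finset.mem_image.1 hb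
  have hne := (Finset.mem_filter.1 hq).2
  have hbR := Finset.mem_of_mem_erase hbe
  have hbT := (Finset.mem_erase.1 hbe).1
  have hdisj : Disjoint (q ∩ T) T := R.disjoint (Finset.mem_coe.2 hbR) (Finset.mem_coe.2 hT) hbT
  obtain ⟨x, hx⟩ := hne
  exact Finset.disjoint_left.1 hdisj hx (Finset.mem_inter.1 hx).2

lemma splitParts_card (R Q : Finpartition (Finset.univ : Finset (Fin ℓ)))
    (T : Finset (Fin ℓ)) (hT : T ∈ R.parts) :
    (splitParts R Q T hT).parts.card + 1
      = R.parts.card + (Q.parts.filter fun q => (q ∩ T).Nonempty).card := by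
  have h1 : (splitParts R Q T hT).parts.card
      = (R.parts.erase T).card
        + ((Q.parts.filter fun q => (q ∩ T).Nonempty).image (· ∩ T)).card :=
    Finset.card_union_of_disjoint (splitParts_img_disj R Q T hT)
  have h2 : ((Q.parts.filter fun q => (q ∩ T).Nonempty).image (· ∩ T)).card
      = (Q.parts.filter fun q => (q ∩ T).Nonempty).card :=
    Finset.card_image_of_injOn (splitParts_injOn Q T)
  have h3 := Finset.card_erase_of_mem hT
  have h4 : 1 ≤ R.parts.card := Finset.card_pos.2 ⟨T, hT⟩
  omega

lemma splitParts_sum (R Q : Finpartition (Finset.univ : Finset (Fin ℓ)))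
    (T : Finset (Fin ℓ)) (hT : T ∈ R.parts) (g : Finset (Fin ℓ) → ℤ) :
    ∑ p ∈ (splitParts R Q T hT).parts, g p + g T
      = ∑ p ∈ R.parts, g p
        + ∑ q ∈ Q.parts.filter fun q => (q ∩ T).Nonempty, g (q ∩ T) := by
  have h1 : ∑ p ∈ (splitParts R Q T hT).parts, g p
      = ∑ p ∈ R.parts.erase T, g p
        + ∑ p ∈ (Q.parts.filter fun q => (q ∩ T).Nonempty).image (· ∩ T), g p :=
    Finset.sum_union (splitParts_img_disj R Q T hT)
  have h2 : ∑ p ∈ (Q.parts.filter fun q => (q ∩ T).Nonempty).image (· ∩ T), g p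
      = ∑ q ∈ Q.parts.filter fun q => (q ∩ T).Nonempty, g (q ∩ T) :=
    Finset.sum_image (fun a ha b hb => splitParts_injOn Q T (Finset.mem_coe.2 ha) (Finset.mem_coe.2 hb))
  have h3 : ∑ p ∈ R.parts.erase T, g p + g T = ∑ p ∈ R.parts, g p :=
    Finset.sum_erase_add _ _ hT
  omega

end AuxSplit

section AuxPval

variable {ℓ n : ℕ} (k : ℕ) (σ : Fin ℓ → ℕ) (A : Fin ℓ → Finset (Fin n))

/-- The value of a partition in the definition of `gid`. -/
def pval (P : Finpartition (Finset.univ : Finset (Fin ℓ))) : ℤ :=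
  -(k : ℤ) * ((P.parts.card : ℤ) - 1)
    + ∑ p ∈ P.parts, ((partMin σ p : ℤ) + ((interSet A p).card : ℤ))

lemma gid_eq_sSup (m : ℕ) :
    gid m σ A = sSup {v : ℤ | ∃ P : Finpartition (Finset.univ : Finset (Fin ℓ)),
      v = pval m σ A P} := rfl

lemma pval_eq (P : Finpartition (Finset.univ : Finset (Fin ℓ))) :
    pval k σ A P = -(k : ℤ) * ((P.parts.card : ℤ) - 1) + ∑ p ∈ P.parts, fval σ A p := rfl

lemma pval_set_finite :
    {v : ℤ | ∃ P : Finpartition (Finset.univ : Finset (Fin ℓ)), v = pval k σ A P}.Finite := by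
  classical
  apply Set.Finite.subset (Set.finite_range (pval k σ A))
  rintro v ⟨P, rfl⟩
  exact ⟨P, rfl⟩

/-- The key uncrossing lemma: if `R` is a tight partition with the maximum number of parts,
then every part of `R` is contained in any part of any tight partition that it meets. -/
lemma uncross (hℓ : 1 ≤ ℓ)
    (hub : ∀ P : Finpartition (Finset.univ : Finset (Fin ℓ)), pval k σ A P ≤ 0)
    (R Q : Finpartition (Finset.univ : Finset (Fin ℓ)))
    (hR : pval k σ A R = 0) (hQ : pval k σ A Q = 0)
    (hmax : ∀ P : Finpartition (Finset.univ : Finset (Fin ℓ)),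
      pval k σ A P = 0 → P.parts.card ≤ R.parts.card)
    {T S : Finset (Fin ℓ)} (hT : T ∈ R.parts) (hS : S ∈ Q.parts)
    (hST : (S ∩ T).Nonempty) : T ⊆ S := by
  classical
  by_contra hsub
  obtain ⟨t, htT, htS⟩ := Finset.not_subset.1 hsub
  set C : Finset (Finset (Fin ℓ)) := Q.parts.filter (fun q => (q ∩ T).Nonempty) with hCdef
  have hCQ : C ⊆ Q.parts := Finset.filter_subset _ _
  have hSC : S ∈ C := Finset.mem_filter.2 ⟨hS, hST⟩
  obtain ⟨q', hq', htq'⟩ := Q.exists_mem (Finset.mem_univ t)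
  have hq'S : q' ≠ S := fun h => htS (h ▸ htq')
  have hq'C : q' ∈ C := Finset.mem_filter.2 ⟨hq', ⟨t, Finset.mem_inter.2 ⟨htq', htT⟩⟩⟩
  have hCne : C.Nonempty := ⟨S, hSC⟩
  have hC2 : 2 ≤ C.card := by
    have : ({S, q'} : Finset (Finset (Fin ℓ))) ⊆ C := by
      intro a ha
      rcases Finset.mem_insert.1 ha with rfl | ha
      · exact hSC
      · rwa [Finset.mem_singleton.1 ha]
    calc 2 = ({S, q'} : Finset (Finset (Fin ℓ))).card := (Finset.card_pair (Ne.symm hq'S)).symm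
    _ ≤ C.card := Finset.card_le_card this
  set W := C.sup id with hW
  -- T is covered by the parts meeting it
  have hTW : T ⊆ W := by
    intro u hu
    obtain ⟨q, hq, huq⟩ := Q.exists_mem (Finset.mem_univ u)
    have : q ∈ C := Finset.mem_filter.2 ⟨hq, ⟨u, Finset.mem_inter.2 ⟨huq, hu⟩⟩⟩
    exact Finset.mem_sup.2 ⟨q, this, huq⟩
  -- step (a): tightness of Q plus the merged partition
  have ha : fval σ A W + (k : ℤ) * ((C.card : ℤ) - 1) ≤ ∑ q ∈ C, fval σ A q := by
    have h1 := hub (mergeParts Q C hCQ hCne)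
    rw [pval_eq] at h1 hQ
    have h2 := mergeParts_sum Q C hCQ hCne (fval σ A)
    have h3 := mergeParts_card Q C hCQ hCne
    have h4 : ((mergeParts Q C hCQ hCne).parts.card : ℤ) + (C.card : ℤ)
        = (Q.parts.card : ℤ) + 1 := by exact_mod_cast congrArg (Nat.cast : ℕ → ℤ) h3
    nlinarith [h1, h2, h4, hQ]
  -- step (b): telescoping
  have hb : (∑ q ∈ C, fval σ A q) + fval σ A T ≤
      (∑ q ∈ C, fval σ A (q ∩ T)) + fval σ A W := by
    have hdisj : (↑C : Set (Finset (Fin ℓ))).PairwiseDisjoint id :=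
      Q.disjoint.subset (by exact_mod_cast hCQ)
    have hmeet : ∀ q ∈ C, (q ∩ T).Nonempty := fun q hq => (Finset.mem_filter.1 hq).2
    have := fval_telescope σ A T (R.nonempty_of_mem_parts hT) C hdisj hmeet
    have hTu : T ∪ C.sup id = W := by
      rw [hW, Finset.union_eq_right.2 hTW]
    rwa [hTu] at this
  -- step (c): the split partition.
  have hsplit : pval k σ A (splitParts R Q T hT) = 0 := by
    have h1 := hub (splitParts R Q T hT)
    have h2 := splitParts_sum R Q T hT (fval σ A)
    have h3 := splitParts_card R Q T hT
    have h4 : ((splitParts R Q T hT).parts.card : ℤ) + 1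
        = (R.parts.card : ℤ) + (C.card : ℤ) := by exact_mod_cast congrArg (Nat.cast : ℕ → ℤ) h3
    rw [pval_eq] at h1 hR ⊢
    nlinarith [h1, h2, h4, hR, ha, hb]
  have h5 := hmax _ hsplit
  have h6 := splitParts_card R Q T hT
  rw [← hCdef] at h6
  omega

end AuxPval

section AuxCount

variable {ℓ n : ℕ} (k : ℕ) (σ : Fin ℓ → ℕ) (A : Fin ℓ → Finset (Fin n))

lemma counting (hkn : k ≤ n) (hproper : ∀ i, σ i + (A i).card ≤ k)
    (T : Finset (Fin ℓ)) : T.Nonempty →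
    (∀ i ∈ T, σ i + (A i).card < k → ∀ j ∈ T, j ≠ i → ∀ x, x ∉ A i → x ∈ A j) →
    fval σ A T + (k : ℤ) * ((T.card : ℤ) - 1) ≤ ∑ i ∈ T, ((σ i : ℤ) + ((A i).card : ℤ)) := by
  classical
  induction T using Finset.strongInduction with
  | _ T ih =>
    intro hT hcov
    by_cases hdef : ∃ i ∈ T, σ i + (A i).card < k
    · obtain ⟨i, hiT, hdefi⟩ := hdef
      rcases Finset.eq_empty_or_nonempty (T.erase i) with hS | hS
      · -- T = {i}
        have hTi : T = {i} := by
          apply Finset.eq_singleton_iff_nonempty_unique_mem.2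
          refine ⟨hT, fun y hy => ?_⟩
          by_contra hne
          exact Finset.notMem_empty y (hS ▸ Finset.mem_erase.2 ⟨hne, hy⟩)
        subst hTi
        rw [fval_singleton, Finset.sum_singleton, Finset.card_singleton]
        simp
      · set S := T.erase i with hSdef
        have hSsub : S ⊂ T := Finset.erase_ssubset hiT
        have IH := ih S hSsub hS (by
          intro a haS hda j hjS hja x hx
          exact hcov a (Finset.mem_of_mem_erase haS) hda j (Finset.mem_of_mem_erase hjS) hja x hx)
        -- covering
        have hcover : A i ∪ interSet A S = Finset.univ := by
          apply Finset.eq_univ_of_forall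
          intro x
          by_cases hx : x ∈ A i
          · exact Finset.mem_union.2 (Or.inl hx)
          · refine Finset.mem_union.2 (Or.inr ((mem_interSet A).2 fun j hj => ?_))
            exact hcov i hiT hdefi j (Finset.mem_of_mem_erase hj) (Finset.mem_erase.1 hj).1 x hx
        have hint : interSet A T = A i ∩ interSet A S := by
          conv_lhs => rw [← Finset.insert_erase hiT]
          exact interSet_insert A i S
        have hcards : (A i).card + (interSet A S).card
            = (interSet A T).card + n := by
          have h := Finset.card_inter_add_card_union (A i) (interSet A S)
          rw [hcover] at h
          have h2 : (Finset.univ : Finset (Fin n)).card = n := by simp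
          rw [hint]
          omega
        have hmins : partMin σ T ≤ partMin σ S := partMin_anti σ hS (Finset.erase_subset i T)
        have hsum : ∑ j ∈ T, ((σ j : ℤ) + ((A j).card : ℤ))
            = ((σ i : ℤ) + ((A i).card : ℤ)) + ∑ j ∈ S, ((σ j : ℤ) + ((A j).card : ℤ)) := by
          rw [hSdef, ← Finset.sum_erase_add T _ hiT]
          ring
        have hcardT : (T.card : ℤ) = (S.card : ℤ) + 1 := by
          rw [hSdef]
          have := Finset.card_erase_of_mem hiT
          have h1 : 1 ≤ T.card := Finset.card_pos.2 hT
          push_cast [this]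
          omega
        rw [fval] at IH ⊢
        rw [hsum, hcardT]
        have hkn' : (k : ℤ) ≤ (n : ℤ) := by exact_mod_cast hkn
        have hm : (partMin σ T : ℤ) ≤ (partMin σ S : ℤ) := by exact_mod_cast hmins
        have hc : ((A i).card : ℤ) + ((interSet A S).card : ℤ)
            = ((interSet A T).card : ℤ) + (n : ℤ) := by exact_mod_cast hcards
        linarith [IH]
    · -- no deficient member: all are exactly k
      push_neg at hdef
      have hall : ∀ i ∈ T, ((σ i : ℤ) + ((A i).card : ℤ)) = (k : ℤ) := by
        intro i hi
        have h1 := hproper i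
        have h2 := hdef i hi
        have : σ i + (A i).card = k := le_antisymm h1 h2
        exact_mod_cast this
      rw [Finset.sum_congr rfl hall, Finset.sum_const, nsmul_eq_mul]
      have hf := fval_le σ A hproper hT
      have h1 : 1 ≤ T.card := Finset.card_pos.2 hT
      have h1' : (1 : ℤ) ≤ (T.card : ℤ) := by exact_mod_cast h1
      nlinarith [hf, h1']

end AuxCount

/-- Minimal expansions preserving `gid = 0`: if a proper configuration has `gid_k = 0`
and total size strictly less than `(ℓ-1)k`, there is a minimal expansion which is again
proper and has `gid_k = 0`. -/
theorem exists_minimal_expansion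
    (ℓ k n b : ℕ) (hℓ : 1 ≤ ℓ) (hb : 1 ≤ b) (hbk : b ≤ k) (hkn : k ≤ n)
    (σ : Fin ℓ → ℕ) (A : Fin ℓ → Finset (Fin n))
    (hσ : ∀ i, σ i ≤ b) (hproper : ∀ i, σ i + (A i).card ≤ k)
    (hgid : gid k σ A = 0)
    (hlt : (∑ i, (σ i + (A i).card)) < (ℓ - 1) * k) :
    ∃ (σ' : Fin ℓ → ℕ) (A' : Fin ℓ → Finset (Fin n)),
      (∀ i, σ i ≤ σ' i) ∧ (∀ i, σ' i ≤ b) ∧ (∀ i, A i ⊆ A' i) ∧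
      (∀ i, σ' i + (A' i).card ≤ k) ∧
      (∑ i, ((σ' i - σ i) + ((A' i).card - (A i).card))) = 1 ∧
      gid k σ' A' = 0 := by
  classical
  have hfin := pval_set_finite k σ A
  have hne0 : {v : ℤ | ∃ P : Finpartition (Finset.univ : Finset (Fin ℓ)),
      v = pval k σ A P}.Nonempty := ⟨_, ⟨⊥, rfl⟩⟩
  have hgid' : sSup {v : ℤ | ∃ P : Finpartition (Finset.univ : Finset (Fin ℓ)),
      v = pval k σ A P} = 0 := by rw [← gid_eq_sSup]; exact hgid
  have hub : ∀ P : Finpartition (Finset.univ : Finset (Fin ℓ)), pval k σ A P ≤ 0 := by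
    intro P
    have : pval k σ A P ∈ {v : ℤ | ∃ P, v = pval k σ A P} := ⟨P, rfl⟩
    have h2 := le_csSup hfin.bddAbove this
    rwa [hgid'] at h2
  have hex : ∃ P : Finpartition (Finset.univ : Finset (Fin ℓ)), pval k σ A P = 0 := by
    have h1 := hne0.csSup_mem hfin
    rw [hgid'] at h1
    obtain ⟨P, hP⟩ := h1
    exact ⟨P, hP.symm⟩
  obtain ⟨R, hRmem, hmax'⟩ := Finset.exists_max_image
    (Finset.univ.filter fun P : Finpartition (Finset.univ : Finset (Fin ℓ)) =>
      pval k σ A P = 0)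
    (fun P => P.parts.card)
    (by obtain ⟨P₀, h⟩ := hex; exact ⟨P₀, by simp [h]⟩)
  have hR : pval k σ A R = 0 := (Finset.mem_filter.1 hRmem).2
  have hmax : ∀ P : Finpartition (Finset.univ : Finset (Fin ℓ)),
      pval k σ A P = 0 → P.parts.card ≤ R.parts.card := fun P hP =>
    hmax' P (Finset.mem_filter.2 ⟨Finset.mem_univ P, hP⟩)
  -- Key claim: some unblocked increment exists.
  have key : ∃ (i : Fin ℓ) (x : Fin n), σ i + (A i).card < k ∧ x ∉ A i ∧
      ∀ P : Finpartition (Finset.univ : Finset (Fin ℓ)), pval k σ A P = 0 →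
        ∀ S ∈ P.parts, i ∈ S → x ∉ interSet A (S.erase i) := by
    by_contra hcon
    push_neg at hcon
    have hparts : ∀ T ∈ R.parts,
        fval σ A T + (k : ℤ) * ((T.card : ℤ) - 1)
          ≤ ∑ i ∈ T, ((σ i : ℤ) + ((A i).card : ℤ)) := by
      intro T hTp
      apply counting k σ A hkn hproper T (R.nonempty_of_mem_parts hTp)
      intro i hiT hdefi j hjT hji x hx
      obtain ⟨P, hP0, S, hSP, hiS, hxS⟩ := hcon i x hdefi hx
      have hTS : T ⊆ S := uncross k σ A hℓ hub R P hR hP0 hmax hTp hSP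
        ⟨i, Finset.mem_inter.2 ⟨hiS, hiT⟩⟩
      exact (mem_interSet A).1 hxS j (Finset.mem_erase.2 ⟨hji, hTS hjT⟩)
    have hsum := Finset.sum_le_sum hparts
    have hfv : ∑ T ∈ R.parts, fval σ A T = (k : ℤ) * ((R.parts.card : ℤ) - 1) := by
      rw [pval_eq] at hR
      linarith [hR]
    have hcardsum : ∑ T ∈ R.parts, (T.card : ℤ) = (ℓ : ℤ) := by
      have h1 := R.sum_card_parts
      have h2 : (Finset.univ : Finset (Fin ℓ)).card = ℓ := by simp
      rw [h2] at h1
      exact_mod_cast h1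
    have hrhs : ∑ T ∈ R.parts, ∑ i ∈ T, ((σ i : ℤ) + ((A i).card : ℤ))
        = ∑ i, ((σ i : ℤ) + ((A i).card : ℤ)) := by
      conv_rhs => rw [← R.biUnion_parts]
      rw [Finset.sum_biUnion (fun a ha b hb hab => R.disjoint ha hb hab)]
      simp only [id_eq]
    have hL : ∑ T ∈ R.parts, (fval σ A T + (k : ℤ) * ((T.card : ℤ) - 1))
        = (k : ℤ) * ((ℓ : ℤ) - 1) := by
      rw [Finset.sum_add_distrib, hfv, ← Finset.mul_sum, Finset.sum_sub_distrib,
        hcardsum, Finset.sum_const, nsmul_eq_mul]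
      ring
    rw [hL, hrhs] at hsum
    have hlt' : ∑ i, ((σ i : ℤ) + ((A i).card : ℤ)) < (k : ℤ) * ((ℓ : ℤ) - 1) := by
      have h1 : ((ℓ - 1 : ℕ) : ℤ) = (ℓ : ℤ) - 1 := by
        have := hℓ; push_cast [Nat.cast_sub this]; ring
      calc ∑ i, ((σ i : ℤ) + ((A i).card : ℤ))
          = ((∑ i, (σ i + (A i).card) : ℕ) : ℤ) := by push_cast; ring
        _ < (((ℓ - 1) * k : ℕ) : ℤ) := by exact_mod_cast hlt
        _ = (k : ℤ) * ((ℓ : ℤ) - 1) := by push_cast [Nat.cast_sub hℓ]; ring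
    linarith
  obtain ⟨i, x, hdefi, hxA, hgood⟩ := key
  set A' : Fin ℓ → Finset (Fin n) := Function.update A i (insert x (A i)) with hA'def
  have hA'i : A' i = insert x (A i) := by simp [hA'def]
  have hA'ne : ∀ j, j ≠ i → A' j = A j := fun j hj => Function.update_of_ne hj _ _
  -- new upper bounds
  have hub' : ∀ P : Finpartition (Finset.univ : Finset (Fin ℓ)), pval k σ A' P ≤ 0 := by
    intro P
    obtain ⟨S, hSP, hiS⟩ := P.exists_mem (Finset.mem_univ i)
    have hAeq : ∀ p ∈ P.parts, p ≠ S → interSet A' p = interSet A p := by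
      intro p hp hpS
      have hAj : ∀ j ∈ p, A j = A' j := by
        intro j hj
        have hji : j ≠ i := fun h => hpS (P.eq_of_mem_parts hp hSP (h ▸ hj) hiS)
        exact (hA'ne j hji).symm
      exact (interSet_congr A hAj).symm
    have hsplitsum : ∑ p ∈ P.parts, fval σ A' p
        = ∑ p ∈ P.parts, fval σ A p + (fval σ A' S - fval σ A S) := by
      have : ∑ p ∈ P.parts, (fval σ A' p - fval σ A p) = fval σ A' S - fval σ A S := by
        apply Finset.sum_eq_single_of_mem S hSP
        intro p hp hpS
        rw [fval, fval, hAeq p hp hpS]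
        ring
      rw [← this, Finset.sum_sub_distrib]
      ring
    by_cases hP0 : pval k σ A P = 0
    · have hxnot := hgood P hP0 S hSP hiS
      have hSeq : interSet A' S = interSet A S := by
        apply Finset.Subset.antisymm
        · intro y hy
          rw [mem_interSet] at hy ⊢
          intro j hj
          by_cases hyx : y = x
          · exfalso
            subst hyx
            apply hxnot
            rw [mem_interSet]
            intro j' hj'
            have hj'i : j' ≠ i := (Finset.mem_erase.1 hj').1
            have := hy j' (Finset.mem_of_mem_erase hj')
            rwa [hA'ne j' hj'i] at this
          · have hyj := hy j hj
            by_cases hji : j = i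
            · subst hji
              rw [hA'i] at hyj
              rcases Finset.mem_insert.1 hyj with h | h
              · exact absurd h hyx
              · exact h
            · rwa [hA'ne j hji] at hyj
        · intro y hy
          rw [mem_interSet] at hy ⊢
          intro j hj
          by_cases hji : j = i
          · subst hji
            rw [hA'i]
            exact Finset.mem_insert_of_mem (hy j hj)
          · rw [hA'ne j hji]
            exact hy j hj
      have : fval σ A' S = fval σ A S := by rw [fval, fval, hSeq]
      rw [pval_eq, hsplitsum, this]
      rw [pval_eq] at hP0
      linarith
    · have hPneg : pval k σ A P ≤ -1 := by
        have := hub P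
        omega
      have hS1 : fval σ A' S ≤ fval σ A S + 1 := by
        have hsub : interSet A' S ⊆ insert x (interSet A S) := by
          intro y hy
          rw [mem_interSet] at hy
          by_cases hyx : y = x
          · exact hyx ▸ Finset.mem_insert_self _ _
          · apply Finset.mem_insert_of_mem
            rw [mem_interSet]
            intro j hj
            have hyj := hy j hj
            by_cases hji : j = i
            · subst hji
              rw [hA'i] at hyj
              rcases Finset.mem_insert.1 hyj with h | h
              · exact absurd h hyx
              · exact h
            · rwa [hA'ne j hji] at hyj
        have h1 := Finset.card_le_card hsub
        have h2 := Finset.card_insert_le x (interSet A S)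
        rw [fval, fval]
        push_cast
        omega
      rw [pval_eq, hsplitsum]
      rw [pval_eq] at hPneg
      linarith
  -- the indiscrete partition gives value ≥ 0
  have huniv_ne : (Finset.univ : Finset (Fin ℓ)) ≠ ⊥ := by
    have hne : (Finset.univ : Finset (Fin ℓ)).Nonempty := ⟨⟨0, hℓ⟩, Finset.mem_univ _⟩
    simp only [Finset.bot_eq_empty]
    exact hne.ne_empty
  have hindis : pval k σ A' (Finpartition.indiscrete huniv_ne) = fval σ A' Finset.univ := by
    rw [pval_eq]
    simp [Finpartition.indiscrete]
  have hmem0 : pval k σ A' (Finpartition.indiscrete huniv_ne) = 0 := by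
    have h1 := hub' (Finpartition.indiscrete huniv_ne)
    have h2 : (0 : ℤ) ≤ fval σ A' Finset.univ := fval_nonneg σ A' _
    omega
  have hgid2 : gid k σ A' = 0 := by
    rw [gid_eq_sSup]
    have hne' : {v : ℤ | ∃ P : Finpartition (Finset.univ : Finset (Fin ℓ)),
        v = pval k σ A' P}.Nonempty := ⟨_, ⟨⊥, rfl⟩⟩
    apply le_antisymm
    · apply csSup_le hne'
      rintro v ⟨P, rfl⟩
      exact hub' P
    · apply le_csSup (pval_set_finite k σ A').bddAbove
      exact ⟨Finpartition.indiscrete huniv_ne, hmem0.symm⟩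
  refine ⟨σ, A', fun _ => le_rfl, hσ, ?_, ?_, ?_, hgid2⟩
  · intro j
    by_cases hji : j = i
    · subst hji; rw [hA'i]; exact Finset.subset_insert _ _
    · rw [hA'ne j hji]
  · intro j
    by_cases hji : j = i
    · subst hji
      rw [hA'i, Finset.card_insert_of_notMem hxA]
      omega
    · rw [hA'ne j hji]; exact hproper j
  · rw [Finset.sum_eq_single_of_mem i (Finset.mem_univ i)]
    · rw [hA'i, Finset.card_insert_of_notMem hxA]
      omega
    · intro j _ hji
      rw [hA'ne j hji]
      omega
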